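/- arXiv:math/0107194 — 2 statements merged into one kernel-verified Lean document; each statement's English description precedes it below -/
import Mathlib

section
/- Let A = (a_{ij})_{0≤i,j≤n} be a matrix over a noncommutative ring R such that all needed quasideterminants of submatrices are defined and invertible. Then the (0,0)-quasideterminant satisfies the expansion |A|₀₀ = a₀₀ - ∑_{i=1}^n |A^{i0}|_{0i} · (|A^{00}|_{ii})⁻¹ · a_{i0}, where A^{ij} denotes the matrix obtained from A by deleting the i-th row and j-th column. -/
/-- column expansion of the quasideterminant: let `A` be an
`(n+1)×(n+1)` matrix over a noncommutative ring, invertible with inverse `B`, so that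
the `(0,0)`-quasideterminant of `A` is `|A|₀₀ = (B 0 0)⁻¹ = q₀₀`.  For `1 ≤ i ≤ n` let
`A^{i0}` (resp. `A^{00}`) be the matrix obtained from `A` by deleting the `i`-th
(resp. `0`-th) row and the `0`-th column, with inverse `Cmat i` (resp. `Dmat`), and let
`p i = |A^{i0}|₀ᵢ` and `r i = |A^{00}|ᵢᵢ` be the corresponding quasideterminants (all
assumed defined and invertible).  Then
`|A|₀₀ = a₀₀ - ∑_{i=1}^n |A^{i0}|₀ᵢ • (|A^{00}|ᵢᵢ)⁻¹ • a_{i0}`. -/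
theorem stmt14 {R : Type*} [Ring R] (n : ℕ)
    (A B : Matrix (Fin (n + 1)) (Fin (n + 1)) R)
    (hAB : A * B = 1) (hBA : B * A = 1)
    (q₀₀ : Rˣ) (hq : ((q₀₀⁻¹ : Rˣ) : R) = B 0 0)
    (Cmat : Fin n → Matrix (Fin n) (Fin n) R)
    (hC : ∀ i : Fin n,
      A.submatrix (Fin.succAbove i.succ) Fin.succ * Cmat i = 1 ∧
      Cmat i * A.submatrix (Fin.succAbove i.succ) Fin.succ = 1)
    (Dmat : Matrix (Fin n) (Fin n) R)
    (hD : A.submatrix Fin.succ Fin.succ * Dmat = 1 ∧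
      Dmat * A.submatrix Fin.succ Fin.succ = 1)
    (p : Fin n → Rˣ) (hp : ∀ i : Fin n, (((p i)⁻¹ : Rˣ) : R) = (Cmat i) i ⟨0, i.pos⟩)
    (r : Fin n → Rˣ) (hr : ∀ i : Fin n, (((r i)⁻¹ : Rˣ) : R) = Dmat i i) :
    (q₀₀ : R) = A 0 0 - ∑ i : Fin n, (p i : R) * Dmat i i * A i.succ 0 := by
  -- the "row 0 times Dmat" vector
  set s : Fin n → R := fun k => ∑ j, A 0 j.succ * Dmat j k with hs
  -- entrywise versions of the hypotheses
  have hAB' : ∀ i j : Fin (n+1), ∑ m, A i m * B m j = if i = j then 1 else 0 := by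
    intro i j
    have := congrFun (congrFun hAB i) j
    simpa [Matrix.mul_apply, Matrix.one_apply] using this
  have hND : ∀ t k : Fin n, ∑ j, A t.succ j.succ * Dmat j k = if t = k then 1 else 0 := by
    intro t k
    have := congrFun (congrFun hD.1 t) k
    simpa [Matrix.mul_apply, Matrix.one_apply] using this
  have hDN : ∀ m j : Fin n, ∑ l, Dmat m l * A l.succ j.succ = if m = j then 1 else 0 := by
    intro m j
    have := congrFun (congrFun hD.2 m) j
    simpa [Matrix.mul_apply, Matrix.one_apply] using this
  -- Step A (homological relation): Cmat k (k,0) * s k = Dmat k k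
  have stepA : ∀ k : Fin n, (Cmat k) k ⟨0, k.pos⟩ * s k = Dmat k k := by
    intro k
    have hCM : ∀ j : Fin n,
        ∑ m, (Cmat k) k m * A ((k.succ).succAbove m) j.succ = if k = j then 1 else 0 := by
      intro j
      have := congrFun (congrFun (hC k).2 k) j
      simpa [Matrix.mul_apply, Matrix.one_apply] using this
    have hσ0 : (k.succ).succAbove ⟨0, k.pos⟩ = 0 := by
      have hlt : (Fin.castSucc (⟨0, k.pos⟩ : Fin n)) < k.succ := by
        simp [Fin.lt_def]
      rw [Fin.succAbove_of_castSucc_lt _ _ hlt]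
      ext; simp
    have hg : ∀ m : Fin n,
        (∑ j, A ((k.succ).succAbove m) j.succ * Dmat j k)
          = if m = ⟨0, k.pos⟩ then s k else 0 := by
      intro m
      by_cases hm : m = ⟨0, k.pos⟩
      · subst hm
        simp [hσ0, hs]
      · rw [if_neg hm]
        have hne0 : (k.succ).succAbove m ≠ 0 := by
          intro h
          exact hm (Fin.succAbove_right_injective (p := k.succ) (h.trans hσ0.symm))
        have hnek : (k.succ).succAbove m ≠ k.succ := Fin.succAbove_ne _ _
        set t : Fin n := ((k.succ).succAbove m).pred hne0 with ht
        have htsucc : ((k.succ).succAbove m) = t.succ := (Fin.succ_pred _ hne0).symm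
        have htk : t ≠ k := by
          intro h
          apply hnek
          rw [htsucc, h]
        rw [htsucc]
        simpa [htk] using hND t k
    calc (Cmat k) k ⟨0, k.pos⟩ * s k
        = ∑ m, (Cmat k) k m * (if m = ⟨0, k.pos⟩ then s k else 0) := by
          simp [mul_ite, mul_zero]
      _ = ∑ m, (Cmat k) k m * (∑ j, A ((k.succ).succAbove m) j.succ * Dmat j k) := by
          simp_rw [hg]
      _ = ∑ m, ∑ j, (Cmat k) k m * (A ((k.succ).succAbove m) j.succ * Dmat j k) := by
          simp_rw [Finset.mul_sum]
      _ = ∑ j, ∑ m, ((Cmat k) k m * A ((k.succ).succAbove m) j.succ) * Dmat j k := by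
          rw [Finset.sum_comm]; simp_rw [mul_assoc]
      _ = ∑ j, (∑ m, (Cmat k) k m * A ((k.succ).succAbove m) j.succ) * Dmat j k := by
          simp_rw [Finset.sum_mul]
      _ = ∑ j, (if k = j then 1 else 0) * Dmat j k := by simp_rw [hCM]
      _ = Dmat k k := by simp
  -- Step B: p k * Dmat k k = s k
  have stepB : ∀ k : Fin n, (p k : R) * Dmat k k = s k := by
    intro k
    calc (p k : R) * Dmat k k = (p k : R) * ((Cmat k) k ⟨0, k.pos⟩ * s k) := by
          rw [stepA k]
      _ = ((p k : R) * (((p k)⁻¹ : Rˣ) : R)) * s k := by rw [hp k, mul_assoc]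
      _ = s k := by rw [Units.mul_inv, one_mul]
  -- Step C: Schur complement identity
  have hu : ∀ j : Fin n, ∑ k, s k * A k.succ j.succ = A 0 j.succ := by
    intro j
    calc ∑ k, s k * A k.succ j.succ
        = ∑ k, ∑ m, A 0 m.succ * Dmat m k * A k.succ j.succ := by
          simp_rw [hs, Finset.sum_mul]
      _ = ∑ m, ∑ k, A 0 m.succ * (Dmat m k * A k.succ j.succ) := by
          rw [Finset.sum_comm]; simp_rw [mul_assoc]
      _ = ∑ m, A 0 m.succ * (∑ k, Dmat m k * A k.succ j.succ) := by
          simp_rw [Finset.mul_sum]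
      _ = ∑ m, A 0 m.succ * (if m = j then 1 else 0) := by simp_rw [hDN]
      _ = A 0 j.succ := by simp
  have h0 : A 0 0 * B 0 0 + ∑ j : Fin n, A 0 j.succ * B j.succ 0 = 1 := by
    have := hAB' 0 0
    rwa [Fin.sum_univ_succ, if_pos rfl] at this
  have h1 : ∀ k : Fin n, A k.succ 0 * B 0 0 + ∑ j : Fin n, A k.succ j.succ * B j.succ 0 = 0 := by
    intro k
    have := hAB' k.succ 0
    rwa [Fin.sum_univ_succ, if_neg (Fin.succ_ne_zero k)] at this
  have hmain : (∑ k : Fin n, s k * A k.succ 0) * B 0 0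
      + ∑ j : Fin n, A 0 j.succ * B j.succ 0 = 0 := by
    calc (∑ k : Fin n, s k * A k.succ 0) * B 0 0 + ∑ j : Fin n, A 0 j.succ * B j.succ 0
        = ∑ k : Fin n, s k * (A k.succ 0 * B 0 0)
            + ∑ j : Fin n, (∑ k : Fin n, s k * A k.succ j.succ) * B j.succ 0 := by
          rw [Finset.sum_mul]
          simp_rw [mul_assoc, hu]
      _ = ∑ k : Fin n, s k * (A k.succ 0 * B 0 0)
            + ∑ k : Fin n, ∑ j : Fin n, s k * (A k.succ j.succ * B j.succ 0) := by
          congr 1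
          simp_rw [Finset.sum_mul, mul_assoc]
          exact Finset.sum_comm
      _ = ∑ k : Fin n, s k * (A k.succ 0 * B 0 0 + ∑ j : Fin n, A k.succ j.succ * B j.succ 0) := by
          rw [← Finset.sum_add_distrib]
          simp_rw [mul_add, Finset.mul_sum]
      _ = 0 := by
          simp_rw [h1, mul_zero, Finset.sum_const_zero]
  have hX : (A 0 0 - ∑ k : Fin n, s k * A k.succ 0) * B 0 0 = 1 := by
    rw [sub_mul]
    have h2 : (∑ k : Fin n, s k * A k.succ 0) * B 0 0 = A 0 0 * B 0 0 - 1 := by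
      rw [eq_neg_of_add_eq_zero_left hmain, eq_sub_of_add_eq' h0, neg_sub]
    rw [h2, sub_sub_cancel]
  have hBq : B 0 0 * (q₀₀ : R) = 1 := by
    rw [← hq, Units.inv_mul]
  calc (q₀₀ : R) = ((A 0 0 - ∑ k, s k * A k.succ 0) * B 0 0) * (q₀₀ : R) := by
        rw [hX, one_mul]
    _ = (A 0 0 - ∑ k, s k * A k.succ 0) * (B 0 0 * (q₀₀ : R)) := by rw [mul_assoc]
    _ = A 0 0 - ∑ k, s k * A k.succ 0 := by rw [hBq, mul_one]
    _ = A 0 0 - ∑ i : Fin n, (p i : R) * Dmat i i * A i.succ 0 := by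
        congr 1
        refine Finset.sum_congr rfl fun i _ => ?_
        rw [stepB i]
end

section
/- Let C be a smooth projective curve and η₁, η₂, η rational 1-forms (global sections of ω_C) with η ≠ 0, such that the divisor of zeros of η consists of distinct points x₁,…,x_{2g-2} and η₁, η₂ do not vanish identically. Then ∑_{i} η₁(xᵢ)η₂(xᵢ)/η'(xᵢ) = 0, where η'(x) ∈ ω_C²|ₓ denotes the image of η ∈ mₓ·ω_C in (mₓ/mₓ²)⊗ω_C ≅ ω_C²|ₓ, and η₁(x)η₂(x) ∈ ω_C²|ₓ. -/
/-!
An abstract model of a smooth projective curve over a field `k`, presented through its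
function field `K` together with, for each closed point: the order of vanishing of a
rational function, a normalized leading coefficient (with respect to a fixed local
parameter at each point, normalized so that a fixed nonzero rational 1-form `η₀` has
leading coefficient `1` everywhere), and the residue of the rational 1-form `f·η₀`.
The divisor of `η₀` is the canonical divisor `Kdiv`.  Line bundles are presented as
divisors `D : Point →₀ ℤ` (the bundle `O_C(D)`), whose rational sections are rational
functions; `secs D = H⁰(C, O_C(D))` is the usual Riemann-Roch space.
-/

structure AlgCurve (k : Type) [Field k] : Type 1 where
  Point : Type
  K : Type
  [fieldK : Field K]
  [algK : Algebra k K]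
  /-- order of vanishing at a point (junk value at `0`) -/
  ord : Point → K → ℤ
  ord_mul : ∀ (x : Point) (f g : K), f ≠ 0 → g ≠ 0 → ord x (f * g) = ord x f + ord x g
  ord_add : ∀ (x : Point) (f g : K), f ≠ 0 → g ≠ 0 → f + g ≠ 0 →
      min (ord x f) (ord x g) ≤ ord x (f + g)
  ord_algebraMap : ∀ (x : Point) (c : k), c ≠ 0 → ord x (algebraMap k K c) = 0
  finite_ord : ∀ f : K, f ≠ 0 → {x : Point | ord x f ≠ 0}.Finite
  /-- a principal divisor has degree zero -/
  deg_principal : ∀ f : K, f ≠ 0 → (∑ᶠ x : Point, ord x f) = 0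
  /-- normalized leading coefficient of `f` at `x` -/
  lc : Point → K → k
  lc_ne_zero : ∀ (x : Point) (f : K), f ≠ 0 → lc x f ≠ 0
  lc_mul : ∀ (x : Point) (f g : K), lc x (f * g) = lc x f * lc x g
  lc_algebraMap : ∀ (x : Point) (c : k), lc x (algebraMap k K c) = c
  genus : ℕ
  /-- the canonical divisor: the divisor of the fixed nonzero rational 1-form `η₀` -/
  Kdiv : Point →₀ ℤ
  deg_Kdiv : (∑ᶠ x : Point, Kdiv x) = 2 * (genus : ℤ) - 2
  /-- residue at `x` of the rational 1-form `f·η₀` -/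
  res : Point → K → k
  res_add : ∀ (x : Point) (f g : K), res x (f + g) = res x f + res x g
  res_smul : ∀ (x : Point) (c : k) (f : K), res x (algebraMap k K c * f) = c * res x f
  res_of_nonneg : ∀ (x : Point) (f : K), f ≠ 0 → 0 ≤ ord x f + Kdiv x → res x f = 0
  /-- at a simple pole of the 1-form `f·η₀` the residue is the leading coefficient -/
  res_simple : ∀ (x : Point) (f : K), f ≠ 0 → ord x f + Kdiv x = -1 → res x f = lc x f
  /-- the residue theorem: the sum of the residues of a rational 1-form vanishes -/
  residue_theorem : ∀ f : K, (∑ᶠ x : Point, res x f) = 0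

attribute [instance] AlgCurve.fieldK AlgCurve.algK

namespace AlgCurve

open scoped Classical

variable {k : Type} [Field k] (C : AlgCurve k)

/-- the space of global sections `H⁰(C, O_C(D))` -/
def secs (D : C.Point →₀ ℤ) : Submodule k C.K where
  carrier := {f | f = 0 ∨ ∀ x, 0 ≤ C.ord x f + D x}
  zero_mem' := Or.inl rfl
  add_mem' := by
    intro a b ha hb
    by_cases ha0 : a = 0
    · simpa [ha0] using hb
    by_cases hb0 : b = 0
    · simpa [hb0] using ha
    rcases ha with rfl | ha
    · exact absurd rfl ha0
    rcases hb with rfl | hb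
    · exact absurd rfl hb0
    by_cases hab : a + b = 0
    · exact Or.inl hab
    refine Or.inr fun x => ?_
    have hmin := C.ord_add x a b ha0 hb0 hab
    have h1 := ha x
    have h2 := hb x
    rcases min_choice (C.ord x a) (C.ord x b) with h | h <;> rw [h] at hmin <;> omega
  smul_mem' := by
    intro c f hf
    by_cases hc : c = 0
    · exact Or.inl (by simp [hc])
    by_cases hf0 : f = 0
    · exact Or.inl (by simp [hf0])
    rcases hf with rfl | hf
    · exact absurd rfl hf0
    refine Or.inr fun x => ?_
    have hsmul : c • f = algebraMap k C.K c * f := Algebra.smul_def c f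
    have hcK : algebraMap k C.K c ≠ 0 := by
      simpa using (map_ne_zero (algebraMap k C.K)).mpr hc
    rw [hsmul, C.ord_mul x _ f hcK hf0, C.ord_algebraMap x c hc]
    simpa using hf x

/-- `h⁰(C, O_C(D))` -/
noncomputable def h0 (D : C.Point →₀ ℤ) : ℕ := Module.finrank k (C.secs D)

/-- the degree of a divisor -/
def degDiv (D : C.Point →₀ ℤ) : ℤ := D.sum fun _ n => n

/-- the value at `y` of `f`, regarded as a rational section of `O_C(D)`, in the fiber
`O_C(D)|_y` trivialized by the canonical rational section of `O_C(D)` -/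
noncomputable def secVal (D : C.Point →₀ ℤ) (y : C.Point) (f : C.K) : k :=
  if f ≠ 0 ∧ C.ord y f + D y = 0 then C.lc y f else 0

/-- `y` is a base point of `O_C(D)`: every global section vanishes at `y` -/
def IsBasePoint (D : C.Point →₀ ℤ) (y : C.Point) : Prop :=
  ∀ f ∈ C.secs D, C.secVal D y f = 0

/-- `(O_C(D), x, y)` is a good triple: `x ≠ y`, `x` is a base point of `ω_C(-D)` and
`y` is a base point of `O_C(D)` -/
def GoodTriple (D : C.Point →₀ ℤ) (x y : C.Point) : Prop :=
  x ≠ y ∧ C.IsBasePoint (C.Kdiv - D) x ∧ C.IsBasePoint D y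

/-- The triple Massey product `m₃(O_C(D), x, y) ∈ (ω_C(-D))|_x ⊗ O_C(D)|_y`, written in
the canonical trivializations of the fibers: choose a rational section `s` of `O_C(D)`
with a first-order pole at `x` and no other poles (i.e. `f ∈ H⁰(O(D+x)) \ H⁰(O(D))`) and
form `s(y)/Res_x(s)`. -/
noncomputable def m3 (D : C.Point →₀ ℤ) (x y : C.Point) : k :=
  if h : ∃ f, f ∈ C.secs (D + Finsupp.single x 1) ∧ f ∉ C.secs D then
    C.secVal D y h.choose / C.secVal (D + Finsupp.single x 1) x h.choose
  else 0

end AlgCurve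

open scoped Classical

/-- if `η = f·η₀` is a nonzero global 1-form whose zero divisor consists of
`2g-2` distinct points (the finset `S`), and `η₁ = g₁·η₀`, `η₂ = g₂·η₀` are global
1-forms not vanishing identically, then `∑_{x ∈ S} η₁(x)η₂(x)/η'(x) = 0`, where (in the
normalized trivializations) `ηᵢ(x) = secVal Kdiv x gᵢ ∈ ω_C|ₓ` and `η'(x) = lc x f` is
the image of `η ∈ mₓ·ω_C` in `(mₓ/mₓ²) ⊗ ω_C ≅ ω_C²|ₓ`. -/
theorem stmt17 {k : Type} [Field k] (C : AlgCurve k)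
    (f g₁ g₂ : C.K) (hf : f ≠ 0) (hg₁ : g₁ ≠ 0) (hg₂ : g₂ ≠ 0)
    (hg₁glob : ∀ p : C.Point, 0 ≤ C.ord p g₁ + C.Kdiv p)
    (hg₂glob : ∀ p : C.Point, 0 ≤ C.ord p g₂ + C.Kdiv p)
    (S : Finset C.Point) (hcard : S.card = 2 * C.genus - 2)
    (hzeros : ∀ p : C.Point, C.ord p f + C.Kdiv p = if p ∈ S then 1 else 0) :
    ∑ p ∈ S, C.secVal C.Kdiv p g₁ * C.secVal C.Kdiv p g₂ / C.lc p f = 0 := by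
  classical
  set h : C.K := g₁ * g₂ * f⁻¹ with hh
  have hfinv : f⁻¹ ≠ 0 := inv_ne_zero hf
  have hh0 : h ≠ 0 := mul_ne_zero (mul_ne_zero hg₁ hg₂) hfinv
  have hordinv : ∀ x, C.ord x f⁻¹ = - C.ord x f := by
    intro x
    have h2 := C.ord_mul x f f⁻¹ hf hfinv
    rw [mul_inv_cancel₀ hf] at h2
    have h1 : C.ord x (1 : C.K) = 0 := by
      simpa using C.ord_algebraMap x 1 one_ne_zero
    omega
  have hordh : ∀ x, C.ord x h = C.ord x g₁ + C.ord x g₂ - C.ord x f := by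
    intro x
    rw [hh, C.ord_mul x _ _ (mul_ne_zero hg₁ hg₂) hfinv,
      C.ord_mul x _ _ hg₁ hg₂, hordinv]
    ring
  have hlcf : ∀ x, C.lc x f ≠ 0 := fun x => C.lc_ne_zero x f hf
  have hlcinv : ∀ x, C.lc x f⁻¹ = (C.lc x f)⁻¹ := by
    intro x
    have h2 := C.lc_mul x f f⁻¹
    rw [mul_inv_cancel₀ hf] at h2
    have h1 : C.lc x (1 : C.K) = 1 := by simpa using C.lc_algebraMap x 1
    rw [h1] at h2
    exact (inv_eq_of_mul_eq_one_right h2.symm).symm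
  have key : ∀ x, C.res x h =
      if x ∈ S then C.secVal C.Kdiv x g₁ * C.secVal C.Kdiv x g₂ / C.lc x f else 0 := by
    intro x
    have ha := hg₁glob x
    have hb := hg₂glob x
    have hz := hzeros x
    by_cases hxS : x ∈ S
    · rw [if_pos hxS] at hz ⊢
      by_cases hab : C.ord x g₁ + C.Kdiv x = 0 ∧ C.ord x g₂ + C.Kdiv x = 0
      · have hord : C.ord x h + C.Kdiv x = -1 := by
          have := hordh x; omega
        rw [C.res_simple x h hh0 hord, hh, C.lc_mul, C.lc_mul, hlcinv]
        unfold AlgCurve.secVal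
        rw [if_pos ⟨hg₁, hab.1⟩, if_pos ⟨hg₂, hab.2⟩]
        rw [div_eq_mul_inv]
      · have hord : 0 ≤ C.ord x h + C.Kdiv x := by
          have := hordh x; omega
        rw [C.res_of_nonneg x h hh0 hord]
        unfold AlgCurve.secVal
        rcases not_and_or.mp hab with hc | hc
        · rw [if_neg (by tauto)]; simp
        · rw [if_neg (show ¬(g₂ ≠ 0 ∧ C.ord x g₂ + C.Kdiv x = 0) by tauto)]; simp
    · rw [if_neg hxS] at hz ⊢
      have hord : 0 ≤ C.ord x h + C.Kdiv x := by
        have := hordh x; omega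
      exact C.res_of_nonneg x h hh0 hord
  have hsum : (∑ᶠ x : C.Point, C.res x h) =
      ∑ p ∈ S, C.secVal C.Kdiv p g₁ * C.secVal C.Kdiv p g₂ / C.lc p f := by
    rw [finsum_eq_sum_of_support_subset _ (s := S)]
    · exact Finset.sum_congr rfl fun p hp => by rw [key p, if_pos hp]
    · intro x hx
      simp only [Function.mem_support, ne_eq, not_not] at hx ⊢
      by_contra hxS
      rw [key x, if_neg (by simpa using hxS)] at hx
      exact hx rfl
  rw [← hsum, C.residue_theorem]
end
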